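/- For any partition λ, the following product-exponential identity holds as an identity of formal power series in v^{-1}: N(v) · ∏_{(i,j)∈λ} (1 - v^{-1} t^{-i+1} q^{j-1})/(1 - v^{-1} t^{-i} q^{j}) = exp( Σ_{r>0} (1/r) · ((1-q^r t^{-r})/(1-q^r)) · v^{-r} t^r · ε_λ(p_r) ), where N(v) = exp( Σ_{r>0} (1/r) · (1-q^r t^{-r})/((1-q^r)(1-t^{-r})) · v^{-r} ) and ε_λ(p_r) = Σ_{i=1}^{ℓ(λ)} q^{λ_i r} t^{-ir} + t^{-(ℓ(λ)+1)r}/(1-t^{-r}). -/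

import Mathlib

set_option maxHeartbeats 1000000

open Finset

lemma logSum_hasSum {x : ℂ} (hx : ‖x‖ < 1) :
    HasSum (fun m : ℕ => x ^ (m + 1) / ((m : ℂ) + 1)) (-Complex.log (1 - x)) := by
  have h := Complex.hasSum_taylorSeries_neg_log hx
  have h2 : HasSum (fun n : ℕ => x ^ (n + 1) / ((n + 1 : ℕ) : ℂ))
      (-Complex.log (1 - x) - ∑ i ∈ range 1, x ^ i / (i : ℂ)) :=
    (hasSum_nat_add_iff' (f := fun n : ℕ => x ^ n / (n : ℂ)) 1).mpr (by simpa using h)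
  have h3 : (fun n : ℕ => x ^ (n + 1) / ((n + 1 : ℕ) : ℂ))
      = fun m : ℕ => x ^ (m + 1) / ((m : ℂ) + 1) := by
    funext n; push_cast; ring
  rw [h3] at h2; simpa using h2

lemma one_sub_ne_zero_of_norm_lt_one {x : ℂ} (hx : ‖x‖ < 1) : 1 - x ≠ 0 := by
  intro h
  have : x = 1 := by linear_combination -h
  rw [this] at hx; simp at hx

lemma pow_ne_one_of_norm_lt_one {x : ℂ} (hx : ‖x‖ < 1) (m : ℕ) : x ^ (m + 1) ≠ 1 := by
  intro h
  have h1 : ‖x ^ (m + 1)‖ < 1 := by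
    rw [norm_pow]; exact pow_lt_one₀ (norm_nonneg x) hx (Nat.succ_ne_zero m)
  rw [h] at h1; simp at h1

lemma perm_identity (q t v : ℂ) (hq : ‖q‖ < 1) (ht : ‖t⁻¹‖ < 1) (ht0 : t ≠ 0)
    (l : ℕ) (lam : ℕ → ℕ) (m : ℕ) :
    ((m : ℂ) + 1)⁻¹ * ((1 - q ^ (m + 1) * (t⁻¹) ^ (m + 1)) /
        ((1 - q ^ (m + 1)) * (1 - (t⁻¹) ^ (m + 1)))) * (v⁻¹) ^ (m + 1)
      + ∑ i ∈ range l, ∑ j ∈ range (lam i),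
          ((v⁻¹ * (t⁻¹) ^ (i + 1) * q ^ (j + 1)) ^ (m + 1) / ((m : ℂ) + 1)
            - (v⁻¹ * (t⁻¹) ^ i * q ^ j) ^ (m + 1) / ((m : ℂ) + 1))
    = ((m : ℂ) + 1)⁻¹ * ((1 - q ^ (m + 1) * (t⁻¹) ^ (m + 1)) / (1 - q ^ (m + 1))) *
        (v⁻¹) ^ (m + 1) * t ^ (m + 1) *
        ((∑ i ∈ range l, q ^ (lam i * (m + 1)) * (t⁻¹) ^ ((i + 1) * (m + 1))) +
          (t⁻¹) ^ ((l + 1) * (m + 1)) / (1 - (t⁻¹) ^ (m + 1))) := by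
  have hm0 : ((m : ℂ) + 1) ≠ 0 := Nat.cast_add_one_ne_zero m
  have hQ1 : q ^ (m + 1) ≠ 1 := pow_ne_one_of_norm_lt_one hq m
  have hS1 : (t⁻¹) ^ (m + 1) ≠ 1 := pow_ne_one_of_norm_lt_one ht m
  have hQ1' : q ^ (m + 1) - 1 ≠ 0 := sub_ne_zero.mpr hQ1
  have hS1' : (t⁻¹) ^ (m + 1) - 1 ≠ 0 := sub_ne_zero.mpr hS1
  have hQ1'' : 1 - q ^ (m + 1) ≠ 0 := sub_ne_zero.mpr (Ne.symm hQ1)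
  have hS1'' : 1 - (t⁻¹) ^ (m + 1) ≠ 0 := sub_ne_zero.mpr (Ne.symm hS1)
  have hrow : ∀ i ∈ range l, ∑ j ∈ range (lam i),
      ((v⁻¹ * (t⁻¹) ^ (i + 1) * q ^ (j + 1)) ^ (m + 1) / ((m : ℂ) + 1)
        - (v⁻¹ * (t⁻¹) ^ i * q ^ j) ^ (m + 1) / ((m : ℂ) + 1))
      = ((v⁻¹) ^ (m + 1) * ((t⁻¹) ^ (m + 1) * q ^ (m + 1) - 1) /
          ((m : ℂ) + 1) / (q ^ (m + 1) - 1)) * (((t⁻¹) ^ (m + 1)) ^ i * (q ^ (m + 1)) ^ (lam i))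
        - ((v⁻¹) ^ (m + 1) * ((t⁻¹) ^ (m + 1) * q ^ (m + 1) - 1) /
          ((m : ℂ) + 1) / (q ^ (m + 1) - 1)) * ((t⁻¹) ^ (m + 1)) ^ i := by
    intro i _
    have h1 : ∑ j ∈ range (lam i),
        ((v⁻¹ * (t⁻¹) ^ (i + 1) * q ^ (j + 1)) ^ (m + 1) / ((m : ℂ) + 1)
          - (v⁻¹ * (t⁻¹) ^ i * q ^ j) ^ (m + 1) / ((m : ℂ) + 1))
        = ((v⁻¹) ^ (m + 1) * ((t⁻¹) ^ (m + 1)) ^ i * ((t⁻¹) ^ (m + 1) * q ^ (m + 1) - 1) /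
            ((m : ℂ) + 1)) * ∑ j ∈ range (lam i), (q ^ (m + 1)) ^ j := by
      rw [Finset.mul_sum]
      refine Finset.sum_congr rfl fun j _ => ?_
      ring
    rw [h1, geom_sum_eq hQ1]
    ring
  rw [Finset.sum_congr rfl hrow, Finset.sum_sub_distrib, ← Finset.mul_sum, ← Finset.mul_sum,
    geom_sum_eq hS1]
  have hRHS : ∑ i ∈ range l, q ^ (lam i * (m + 1)) * (t⁻¹) ^ ((i + 1) * (m + 1))
      = (∑ i ∈ range l, ((t⁻¹) ^ (m + 1)) ^ i * (q ^ (m + 1)) ^ (lam i)) * (t⁻¹) ^ (m + 1) := by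
    rw [Finset.sum_mul]
    refine Finset.sum_congr rfl fun i _ => ?_
    ring
  have hT : t ^ (m + 1) = (((t⁻¹) ^ (m + 1)))⁻¹ := by rw [← inv_pow, inv_inv]
  have hL : (t⁻¹) ^ ((l + 1) * (m + 1)) = ((t⁻¹) ^ (m + 1)) ^ (l + 1) := by
    rw [← pow_mul, mul_comm]
  rw [hRHS, hT, hL]
  generalize (∑ i ∈ range l, ((t⁻¹) ^ (m + 1)) ^ i * (q ^ (m + 1)) ^ (lam i)) = X
  set Q := q ^ (m + 1) with hQdef
  set S := (t⁻¹) ^ (m + 1) with hSdef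
  set U := (v⁻¹) ^ (m + 1) with hUdef
  clear hrow hRHS hT hL
  have hs0 : ((t⁻¹) ^ (m + 1)) ≠ 0 := pow_ne_zero _ (inv_ne_zero ht0)
  field_simp
  rw [eq_div_iff hs0]
  ring

lemma A_summable (q t v : ℂ) (hq : ‖q‖ < 1) (ht : ‖t⁻¹‖ < 1) (hv : ‖v⁻¹‖ < 1) :
    Summable (fun m : ℕ => ((m : ℂ) + 1)⁻¹ *
      ((1 - q ^ (m + 1) * (t⁻¹) ^ (m + 1)) /
        ((1 - q ^ (m + 1)) * (1 - (t⁻¹) ^ (m + 1)))) * (v⁻¹) ^ (m + 1)) := by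
  have hq1 : (0:ℝ) < 1 - ‖q‖ := by linarith
  have ht1 : (0:ℝ) < 1 - ‖t⁻¹‖ := by linarith
  set C : ℝ := 2 / ((1 - ‖q‖) * (1 - ‖t⁻¹‖)) with hCdef
  have hC : 0 ≤ C := le_of_lt (div_pos two_pos (mul_pos hq1 ht1))
  refine Summable.of_norm_bounded (g := fun m => C * ‖v⁻¹‖ ^ m)
    ((summable_geometric_of_lt_one (norm_nonneg _) hv).mul_left C) ?_
  intro m
  have e1 : ‖((m : ℂ) + 1)⁻¹‖ ≤ 1 := by
    rw [norm_inv]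
    have h1 : (1:ℝ) ≤ ‖((m : ℂ) + 1)‖ := by
      have h2 : ((m : ℂ) + 1) = ((m + 1 : ℕ) : ℂ) := by push_cast; ring
      rw [h2, Complex.norm_natCast]
      exact_mod_cast Nat.one_le_iff_ne_zero.mpr (Nat.succ_ne_zero m)
    exact inv_le_one_of_one_le₀ h1
  have e2 : ‖(1 - q ^ (m + 1) * (t⁻¹) ^ (m + 1)) /
      ((1 - q ^ (m + 1)) * (1 - (t⁻¹) ^ (m + 1)))‖ ≤ C := by
    rw [norm_div, norm_mul]
    refine div_le_div₀ (by positivity) ?_ (mul_pos hq1 ht1) ?_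
    · calc ‖1 - q ^ (m + 1) * (t⁻¹) ^ (m + 1)‖
          ≤ ‖(1:ℂ)‖ + ‖q ^ (m + 1) * (t⁻¹) ^ (m + 1)‖ := norm_sub_le _ _
        _ ≤ 2 := by
            rw [norm_one, norm_mul, norm_pow, norm_pow]
            have h3 : ‖q‖ ^ (m + 1) * ‖t⁻¹‖ ^ (m + 1) ≤ 1 :=
              mul_le_one₀ (pow_le_one₀ (norm_nonneg q) hq.le) (by positivity)
                (pow_le_one₀ (norm_nonneg _) ht.le)
            linarith
    · have f1 : 1 - ‖q‖ ≤ ‖1 - q ^ (m + 1)‖ := by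
        have h4 := norm_sub_norm_le (1:ℂ) (q ^ (m + 1))
        rw [norm_one, norm_pow] at h4
        have h5 : ‖q‖ ^ (m + 1) ≤ ‖q‖ ^ 1 :=
          pow_le_pow_of_le_one (norm_nonneg q) hq.le (by omega)
        rw [pow_one] at h5
        linarith
      have f2 : 1 - ‖t⁻¹‖ ≤ ‖1 - (t⁻¹) ^ (m + 1)‖ := by
        have h4 := norm_sub_norm_le (1:ℂ) ((t⁻¹) ^ (m + 1))
        rw [norm_one, norm_pow] at h4
        have h5 : ‖t⁻¹‖ ^ (m + 1) ≤ ‖t⁻¹‖ ^ 1 :=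
          pow_le_pow_of_le_one (norm_nonneg _) ht.le (by omega)
        rw [pow_one] at h5
        linarith
      exact mul_le_mul f1 f2 ht1.le (norm_nonneg _)
  have e3 : ‖v⁻¹‖ ^ (m + 1) ≤ ‖v⁻¹‖ ^ m :=
    pow_le_pow_of_le_one (norm_nonneg _) hv.le (by omega)
  calc ‖((m : ℂ) + 1)⁻¹ * ((1 - q ^ (m + 1) * (t⁻¹) ^ (m + 1)) /
        ((1 - q ^ (m + 1)) * (1 - (t⁻¹) ^ (m + 1)))) * (v⁻¹) ^ (m + 1)‖
      = ‖((m : ℂ) + 1)⁻¹‖ * ‖(1 - q ^ (m + 1) * (t⁻¹) ^ (m + 1)) /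
        ((1 - q ^ (m + 1)) * (1 - (t⁻¹) ^ (m + 1)))‖ * ‖v⁻¹‖ ^ (m + 1) := by
        rw [norm_mul, norm_mul, norm_pow]
    _ ≤ 1 * C * ‖v⁻¹‖ ^ m :=
        mul_le_mul (mul_le_mul e1 e2 (norm_nonneg _) zero_le_one) e3 (by positivity)
          (by positivity)
    _ = C * ‖v⁻¹‖ ^ m := by ring

/-- For any partition `λ` (length `l`, parts `lam`), with `|q|, |t⁻¹|, |v⁻¹| < 1`:
`N(v) · ∏_{(i,j)∈λ} (1 - v⁻¹ t^{-i+1} q^{j-1})/(1 - v⁻¹ t^{-i} q^{j})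
  = exp( Σ_{r>0} (1/r) ((1-q^r t^{-r})/(1-q^r)) v^{-r} t^r ε_λ(p_r) )`,
where `N(v) = exp( Σ_{r>0} (1/r) (1-q^r t^{-r})/((1-q^r)(1-t^{-r})) v^{-r} )` and
`ε_λ(p_r) = Σ_{i=1}^{ℓ(λ)} q^{λ_i r} t^{-ir} + t^{-(ℓ(λ)+1)r}/(1-t^{-r})`. -/
theorem N_times_product_eq_exp (q t v : ℂ) (hq : ‖q‖ < 1) (ht : ‖t⁻¹‖ < 1) (ht0 : t ≠ 0)
    (hv : ‖v⁻¹‖ < 1) (l : ℕ) (lam : ℕ → ℕ)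
    (hmono : ∀ i j, i ≤ j → lam j ≤ lam i) (hvan : ∀ i, l ≤ i → lam i = 0) :
    Complex.exp (∑' m : ℕ, ((m : ℂ) + 1)⁻¹ *
          ((1 - q ^ (m + 1) * (t⁻¹) ^ (m + 1)) /
            ((1 - q ^ (m + 1)) * (1 - (t⁻¹) ^ (m + 1)))) * (v⁻¹) ^ (m + 1)) *
        ∏ i ∈ range l, ∏ j ∈ range (lam i),
          (1 - v⁻¹ * (t⁻¹) ^ i * q ^ j) / (1 - v⁻¹ * (t⁻¹) ^ (i + 1) * q ^ (j + 1))
      = Complex.exp (∑' m : ℕ, ((m : ℂ) + 1)⁻¹ *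
          ((1 - q ^ (m + 1) * (t⁻¹) ^ (m + 1)) / (1 - q ^ (m + 1))) *
          (v⁻¹) ^ (m + 1) * t ^ (m + 1) *
          ((∑ i ∈ range l, q ^ (lam i * (m + 1)) * (t⁻¹) ^ ((i + 1) * (m + 1))) +
            (t⁻¹) ^ ((l + 1) * (m + 1)) / (1 - (t⁻¹) ^ (m + 1)))) := by
  have hx : ∀ i j : ℕ, ‖v⁻¹ * (t⁻¹) ^ i * q ^ j‖ < 1 := by
    intro i j
    have h1 : ‖t⁻¹‖ ^ i ≤ 1 := pow_le_one₀ (norm_nonneg _) ht.le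
    have h2 : ‖q‖ ^ j ≤ 1 := pow_le_one₀ (norm_nonneg _) hq.le
    calc ‖v⁻¹ * (t⁻¹) ^ i * q ^ j‖ = ‖v⁻¹‖ * ‖t⁻¹‖ ^ i * ‖q‖ ^ j := by
          rw [norm_mul, norm_mul, norm_pow, norm_pow]
      _ ≤ ‖v⁻¹‖ * 1 * 1 := by
          exact mul_le_mul (mul_le_mul le_rfl h1 (by positivity) (norm_nonneg _)) h2
            (by positivity) (by positivity)
      _ = ‖v⁻¹‖ := by ring
      _ < 1 := hv
  have hprod : ∏ i ∈ range l, ∏ j ∈ range (lam i),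
      (1 - v⁻¹ * (t⁻¹) ^ i * q ^ j) / (1 - v⁻¹ * (t⁻¹) ^ (i + 1) * q ^ (j + 1))
      = Complex.exp (∑ i ∈ range l, ∑ j ∈ range (lam i),
          (Complex.log (1 - v⁻¹ * (t⁻¹) ^ i * q ^ j)
            - Complex.log (1 - v⁻¹ * (t⁻¹) ^ (i + 1) * q ^ (j + 1)))) := by
    rw [Complex.exp_sum]
    refine Finset.prod_congr rfl fun i _ => ?_
    rw [Complex.exp_sum]
    refine Finset.prod_congr rfl fun j _ => ?_
    rw [Complex.exp_sub, Complex.exp_log (one_sub_ne_zero_of_norm_lt_one (hx i j)),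
      Complex.exp_log (one_sub_ne_zero_of_norm_lt_one (hx (i + 1) (j + 1)))]
  have hD : HasSum (fun m : ℕ => ∑ i ∈ range l, ∑ j ∈ range (lam i),
      ((v⁻¹ * (t⁻¹) ^ (i + 1) * q ^ (j + 1)) ^ (m + 1) / ((m : ℂ) + 1)
        - (v⁻¹ * (t⁻¹) ^ i * q ^ j) ^ (m + 1) / ((m : ℂ) + 1)))
      (∑ i ∈ range l, ∑ j ∈ range (lam i),
        (Complex.log (1 - v⁻¹ * (t⁻¹) ^ i * q ^ j)
          - Complex.log (1 - v⁻¹ * (t⁻¹) ^ (i + 1) * q ^ (j + 1)))) := by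
    refine hasSum_sum fun i _ => hasSum_sum fun j _ => ?_
    have h1 := (logSum_hasSum (hx (i + 1) (j + 1))).sub (logSum_hasSum (hx i j))
    convert h1 using 1
    · rfl
    ring
  have hA := A_summable q t v hq ht hv
  rw [hprod, ← Complex.exp_add]
  congr 1
  rw [← (hA.hasSum.add hD).tsum_eq]
  exact (tsum_congr fun m => (perm_identity q t v hq ht ht0 l lam m).symm).symm
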